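/- Let n and b be natural numbers with n ≥ 2 and b ≥ 2. For every i ∈ {1,…,n−1} and every k ∈ {1,…,b−1}, the number of tuples (t_1,…,t_(n+1)) ∈ R_b(n) with t_i = k equals (b+1)·(b^(n−1) − b^(n−i−1)). -/

import Mathlib

/-- `R_b(n)`: tuples `(t_1,…,t_(n+1))` with entries in `{0,…,b}` (encoded as functions
`ℕ → ℕ` supported on `{1,…,n+1}`) such that: `t_(n+1) ≤ b−1`; if `t_j = b` then `t_i = 0`
for all `i < j`; if `t_(n+1) = b−1` then `t_n ≤ b−1`; and if `t_n = t_(n+1) = b−1` then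
`t_1 = ⋯ = t_(n−1) = 0`. -/
def Rb (b n : ℕ) (t : ℕ → ℕ) : Prop :=
  (∀ j, t j ≤ b) ∧
  (∀ j, j ∉ Finset.Icc 1 (n + 1) → t j = 0) ∧
  t (n + 1) ≤ b - 1 ∧
  (∀ j, t j = b → ∀ i < j, t i = 0) ∧
  (t (n + 1) = b - 1 → t n ≤ b - 1) ∧
  (t n = b - 1 → t (n + 1) = b - 1 → ∀ i, 1 ≤ i → i ≤ n - 1 → t i = 0)

noncomputable section RbAux

open scoped Classical

/-- Functions supported on `[s, s+l-1]` with values `< b`. -/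
def boxF (b : ℕ) : ℕ → ℕ → Finset (ℕ → ℕ)
  | 0, _ => {fun _ => 0}
  | (l+1), s => ((Finset.range b) ×ˢ boxF b l (s+1)).image
      (fun q => Function.update q.2 s q.1)

lemma mem_boxF {b : ℕ} (hb : 1 ≤ b) : ∀ (l s : ℕ) (t : ℕ → ℕ),
    t ∈ boxF b l s ↔ (∀ j, t j < b) ∧ (∀ j, j ∉ Finset.Ico s (s + l) → t j = 0) := by
  intro l
  induction l with
  | zero =>
    intro s t
    simp only [boxF, Finset.mem_singleton]
    constructor
    · rintro rfl
      exact ⟨fun j => hb, fun j _ => rfl⟩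
    · rintro ⟨h1, h2⟩
      funext j
      exact h2 j (by intro hmem; rw [Finset.mem_Ico] at hmem; omega)
  | succ l ih =>
    intro s t
    simp only [boxF, Finset.mem_image, Finset.mem_product, Finset.mem_range]
    constructor
    · rintro ⟨⟨a, u⟩, ⟨ha, hu⟩, rfl⟩
      obtain ⟨hu1, hu2⟩ := (ih (s+1) u).1 hu
      constructor
      · intro j
        rcases eq_or_ne j s with rfl | hj
        · simpa using ha
        · simpa [Function.update_of_ne hj] using hu1 j
      · intro j hj
        rw [Finset.mem_Ico] at hj
        have hjs : j ≠ s := by omega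
        rw [Function.update_of_ne hjs]
        apply hu2
        rw [Finset.mem_Ico]
        omega
    · rintro ⟨h1, h2⟩
      refine ⟨(t s, Function.update t s 0), ⟨h1 s, ?_⟩, ?_⟩
      · show Function.update t s 0 ∈ boxF b l (s+1)
        rw [ih]
        refine ⟨fun j => ?_, fun j hj => ?_⟩
        · rcases eq_or_ne j s with rfl | hj
          · simpa using Nat.pos_of_ne_zero (by omega : b ≠ 0)
          · simpa [Function.update_of_ne hj] using h1 j
        · rw [Finset.mem_Ico] at hj
          rcases eq_or_ne j s with rfl | hjs
          · simp
          · rw [Function.update_of_ne hjs]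
            apply h2
            rw [Finset.mem_Ico]
            omega
      · show Function.update (Function.update t s 0) s (t s) = t
        funext j
        rcases eq_or_ne j s with rfl | hj
        · simp
        · simp [Function.update_of_ne hj]

lemma card_boxF {b : ℕ} (hb : 1 ≤ b) : ∀ (l s : ℕ), (boxF b l s).card = b ^ l := by
  intro l
  induction l with
  | zero => intro s; simp [boxF]
  | succ l ih =>
    intro s
    rw [boxF, Finset.card_image_of_injOn, Finset.card_product, Finset.card_range, ih,
      pow_succ, mul_comm]
    rintro ⟨a, u⟩ h ⟨a', u'⟩ h' heq
    simp only [Finset.mem_coe, Finset.mem_product, Finset.mem_range] at h h'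
    have hu0 : u s = 0 := ((mem_boxF hb _ _ u).1 h.2).2 s
      (by intro hmem; rw [Finset.mem_Ico] at hmem; omega)
    have hu0' : u' s = 0 := ((mem_boxF hb _ _ u').1 h'.2).2 s
      (by intro hmem; rw [Finset.mem_Ico] at hmem; omega)
    have ha : a = a' := by
      have := congrFun heq s
      simpa using this
    have hu : u = u' := by
      funext j
      rcases eq_or_ne j s with rfl | hj
      · rw [hu0, hu0']
      · have := congrFun heq j
        simpa [Function.update_of_ne hj] using this
    simp [Prod.ext_iff, ha, hu]

/-- Valid prefixes of length `m`: supported on `[1,m]`, values `≤ b`, and a value `b`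
forces all earlier values to be `0`. -/
def prefF (b : ℕ) : ℕ → Finset (ℕ → ℕ)
  | 0 => {fun _ => 0}
  | (m+1) => (((Finset.range b) ×ˢ prefF b m).image
      (fun q => Function.update q.2 (m+1) q.1)) ∪ {fun j => if j = m + 1 then b else 0}

lemma mem_prefF {b : ℕ} (hb : 1 ≤ b) : ∀ (m : ℕ) (t : ℕ → ℕ),
    t ∈ prefF b m ↔ (∀ j, t j ≤ b) ∧ (∀ j, j ∉ Finset.Icc 1 m → t j = 0) ∧
      (∀ j, t j = b → ∀ l, l < j → t l = 0) := by
  intro m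
  induction m with
  | zero =>
    intro t
    simp only [prefF, Finset.mem_singleton]
    constructor
    · rintro rfl
      exact ⟨fun j => Nat.zero_le b, fun j _ => rfl, fun j hj l hl => rfl⟩
    · rintro ⟨h1, h2, h3⟩
      funext j
      exact h2 j (by intro hmem; rw [Finset.mem_Icc] at hmem; omega)
  | succ m ih =>
    intro t
    simp only [prefF, Finset.mem_union, Finset.mem_image, Finset.mem_product,
      Finset.mem_range, Finset.mem_singleton]
    constructor
    · rintro (⟨⟨a, u⟩, ⟨ha, hu⟩, rfl⟩ | rfl)
      · dsimp only
        obtain ⟨hu1, hu2, hu3⟩ := (ih u).1 hu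
        refine ⟨fun j => ?_, fun j hj => ?_, fun j hj l hl => ?_⟩
        · rcases eq_or_ne j (m+1) with rfl | hj
          · simp; omega
          · simpa [Function.update_of_ne hj] using hu1 j
        · rw [Finset.mem_Icc] at hj
          have hjm : j ≠ m + 1 := by omega
          rw [Function.update_of_ne hjm]
          exact hu2 j (by rw [Finset.mem_Icc]; omega)
        · rcases eq_or_ne j (m+1) with rfl | hjm
          · rw [Function.update_self] at hj; omega
          · rw [Function.update_of_ne hjm] at hj
            have hj1 : j ≤ m := by
              by_contra hc
              have : u j = 0 := hu2 j (by rw [Finset.mem_Icc]; omega)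
              omega
            have hlm : l ≠ m + 1 := by omega
            rw [Function.update_of_ne hlm]
            exact hu3 j hj l hl
      · dsimp only
        refine ⟨fun j => ?_, fun j hj => ?_, fun j hj l hl => ?_⟩
        · split_ifs <;> omega
        · rw [Finset.mem_Icc] at hj
          rw [if_neg (by omega)]
        · have : j = m + 1 := by
            by_contra hc
            rw [if_neg hc] at hj; omega
          subst this
          rw [if_neg (by omega)]
    · rintro ⟨h1, h2, h3⟩
      rcases eq_or_ne (t (m+1)) b with hb' | hb'
      · right
        funext j
        rcases eq_or_ne j (m+1) with rfl | hj
        · rw [if_pos rfl, hb']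
        · rw [if_neg hj]
          rcases lt_or_gt_of_ne hj with hlt | hgt
          · exact h3 (m+1) hb' j hlt
          · exact h2 j (by rw [Finset.mem_Icc]; omega)
      · left
        refine ⟨(t (m+1), Function.update t (m+1) 0), ⟨by have := h1 (m+1); omega, ?_⟩, ?_⟩
        · show Function.update t (m+1) 0 ∈ prefF b m
          rw [ih]
          refine ⟨fun j => ?_, fun j hj => ?_, fun j hj l hl => ?_⟩
          · rcases eq_or_ne j (m+1) with rfl | hj
            · simp
            · simpa [Function.update_of_ne hj] using h1 j
          · rw [Finset.mem_Icc] at hj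
            rcases eq_or_ne j (m+1) with rfl | hjm
            · simp
            · rw [Function.update_of_ne hjm]
              exact h2 j (by rw [Finset.mem_Icc]; omega)
          · rcases eq_or_ne j (m+1) with rfl | hjm
            · rw [Function.update_self] at hj; omega
            · rw [Function.update_of_ne hjm] at hj
              have hjle : j ≤ m := by
                by_contra hc
                have : t j = 0 := h2 j (by rw [Finset.mem_Icc]; omega)
                omega
              have hlm : l ≠ m + 1 := by omega
              rw [Function.update_of_ne hlm]
              exact h3 j hj l hl
        · show Function.update (Function.update t (m+1) 0) (m+1) (t (m+1)) = t
          funext j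
          rcases eq_or_ne j (m+1) with rfl | hj
          · simp
          · simp [Function.update_of_ne hj]

lemma card_prefF {b : ℕ} (hb : 1 ≤ b) :
    ∀ m : ℕ, (prefF b m).card = ∑ j ∈ Finset.range (m + 1), b ^ j := by
  intro m
  induction m with
  | zero => simp [prefF]
  | succ m ih =>
    have hdisj : Disjoint (((Finset.range b) ×ˢ prefF b m).image
        (fun q => Function.update q.2 (m+1) q.1))
        ({fun j => if j = m + 1 then b else 0} : Finset (ℕ → ℕ)) := by
      rw [Finset.disjoint_right]
      intro x hx hmem
      rw [Finset.mem_singleton] at hx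
      rw [Finset.mem_image] at hmem
      obtain ⟨⟨a, u⟩, hq, hxq⟩ := hmem
      rw [Finset.mem_product, Finset.mem_range] at hq
      have h1 : x (m+1) = b := by rw [hx]; simp
      have h2 : x (m+1) = a := by rw [← hxq]; simp
      omega
    have hsum : ∑ j ∈ Finset.range (m + 1 + 1), b ^ j
        = b * ∑ j ∈ Finset.range (m + 1), b ^ j + 1 := by
      rw [Finset.sum_range_succ', Finset.mul_sum, pow_zero]
      congr 1
      apply Finset.sum_congr rfl
      intro x _
      rw [pow_succ, mul_comm]
    rw [prefF, Finset.card_union_of_disjoint hdisj, Finset.card_singleton,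
      Finset.card_image_of_injOn, Finset.card_product, Finset.card_range, ih, hsum]
    · rintro ⟨a, u⟩ h ⟨a', u'⟩ h' heq
      simp only [Finset.mem_coe, Finset.mem_product, Finset.mem_range] at h h'
      have hu0 : u (m+1) = 0 := ((mem_prefF hb _ u).1 h.2).2.1 (m+1)
        (by intro hmem; rw [Finset.mem_Icc] at hmem; omega)
      have hu0' : u' (m+1) = 0 := ((mem_prefF hb _ u').1 h'.2).2.1 (m+1)
        (by intro hmem; rw [Finset.mem_Icc] at hmem; omega)
      have ha : a = a' := by
        have := congrFun heq (m+1)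
        simpa using this
      have hu : u = u' := by
        funext j
        rcases eq_or_ne j (m+1) with rfl | hj
        · rw [hu0, hu0']
        · have := congrFun heq j
          simpa [Function.update_of_ne hj] using this
      simp [Prod.ext_iff, ha, hu]

end RbAux


section RbMain

open Finset
open scoped Classical

/-- Assembly map. -/
noncomputable def asmF (i k n : ℕ) (q : (ℕ → ℕ) × (ℕ → ℕ) × ℕ × ℕ) : ℕ → ℕ :=
  fun j => if j = i then k else if j = n then q.2.2.1 else if j = n + 1 then q.2.2.2
    else q.1 j + q.2.1 j

lemma asmF_apply (i k n : ℕ) (p m : ℕ → ℕ) (x y j : ℕ) :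
    asmF i k n (p, m, x, y) j
      = if j = i then k else if j = n then x else if j = n + 1 then y else p j + m j := rfl

theorem Rb_count_fixed_middle (n b : ℕ) (hn : 2 ≤ n) (hb : 2 ≤ b)
    (i k : ℕ) (hi1 : 1 ≤ i) (hi2 : i ≤ n - 1) (hk1 : 1 ≤ k) (hk2 : k ≤ b - 1) :
    Set.ncard {t : ℕ → ℕ | Rb b n t ∧ t i = k}
      = (b + 1) * (b ^ (n - 1) - b ^ (n - i - 1)) := by
  classical
  have hb1 : 1 ≤ b := by omega
  have hkb : k < b := by omega
  have hin : i < n := by omega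
  set P := prefF b (i - 1) with hP
  set M := boxF b (n - 1 - i) (i + 1) with hM
  set Q := ((Finset.range b ×ˢ Finset.range b).erase (b - 1, b - 1)) with hQ
  set F := (P ×ˢ M ×ˢ Q).image (asmF i k n) with hF
  have hIco : i + 1 + (n - 1 - i) = n := by omega
  -- membership characterizations specialized
  have hmemP : ∀ p : ℕ → ℕ, p ∈ P ↔ (∀ j, p j ≤ b) ∧ (∀ j, j ∉ Finset.Icc 1 (i - 1) → p j = 0) ∧
      (∀ j, p j = b → ∀ l, l < j → p l = 0) := fun p => mem_prefF hb1 (i - 1) p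
  have hmemM : ∀ m : ℕ → ℕ, m ∈ M ↔ (∀ j, m j < b) ∧
      (∀ j, j ∉ Finset.Ico (i + 1) n → m j = 0) := by
    intro m
    rw [hM, mem_boxF hb1, hIco]
  -- Step 1: set equality
  have hset : {t : ℕ → ℕ | Rb b n t ∧ t i = k} = ↑F := by
    ext t
    simp only [Set.mem_setOf_eq, hF, Finset.coe_image, Set.mem_image, Finset.mem_coe,
      Finset.mem_product]
    constructor
    · rintro ⟨⟨h1, h2, h3, h4, h5, h6⟩, hik⟩
      have htn : t n < b := by
        rcases lt_or_eq_of_le (h1 n) with h | h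
        · exact h
        · have := h4 n h i hin
          omega
      have htmid : ∀ j, i < j → j ≤ n - 1 → t j < b := by
        intro j hj1 hj2
        rcases lt_or_eq_of_le (h1 j) with h | h
        · exact h
        · have := h4 j h i hj1
          omega
      refine ⟨⟨fun j => if 1 ≤ j ∧ j ≤ i - 1 then t j else 0,
        fun j => if i + 1 ≤ j ∧ j ≤ n - 1 then t j else 0, t n, t (n + 1)⟩,
        ⟨?_, ?_, ?_⟩, ?_⟩
      · rw [hmemP]
        dsimp only
        refine ⟨fun j => ?_, fun j hj => ?_, fun j hj l hl => ?_⟩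
        · split_ifs with h
          · exact h1 j
          · omega
        · rw [Finset.mem_Icc] at hj
          rw [if_neg (by omega)]
        · have hcond : 1 ≤ j ∧ j ≤ i - 1 := by
            by_contra hc
            rw [if_neg hc] at hj
            omega
          rw [if_pos hcond] at hj
          have := h4 j hj l hl
          split_ifs with h
          · exact this
          · rfl
      · rw [hmemM]
        dsimp only
        refine ⟨fun j => ?_, fun j hj => ?_⟩
        · split_ifs with h
          · exact htmid j (by omega) h.2
          · omega
        · rw [Finset.mem_Ico] at hj
          rw [if_neg (by omega)]
      · rw [hQ, Finset.mem_erase]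
        dsimp only
        constructor
        · intro heq
          have hA : t n = b - 1 := congrArg Prod.fst heq
          have hB : t (n + 1) = b - 1 := congrArg Prod.snd heq
          have := h6 hA hB i hi1 hi2
          omega
        · rw [Finset.mem_product, Finset.mem_range, Finset.mem_range]
          exact ⟨htn, by omega⟩
      · funext j
        rw [asmF_apply]
        by_cases hji : j = i
        · rw [if_pos hji, hji, hik]
        · rw [if_neg hji]
          by_cases hjn : j = n
          · rw [if_pos hjn, hjn]
          · rw [if_neg hjn]
            by_cases hjn1 : j = n + 1
            · rw [if_pos hjn1, hjn1]
            · rw [if_neg hjn1]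
              by_cases hA : 1 ≤ j ∧ j ≤ i - 1
              · rw [if_pos hA, if_neg (show ¬(i + 1 ≤ j ∧ j ≤ n - 1) by omega), add_zero]
              · by_cases hB : i + 1 ≤ j ∧ j ≤ n - 1
                · rw [if_neg hA, if_pos hB, zero_add]
                · rw [if_neg hA, if_neg hB, h2 j (by rw [Finset.mem_Icc]; omega)]
    · rintro ⟨⟨p, m, x, y⟩, ⟨hp, hm, hxy⟩, rfl⟩
      dsimp only at hp hm hxy
      obtain ⟨hp1, hp2, hp3⟩ := (hmemP p).1 hp
      obtain ⟨hm1, hm2⟩ := (hmemM m).1 hm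
      rw [hQ, Finset.mem_erase, Finset.mem_product, Finset.mem_range, Finset.mem_range] at hxy
      obtain ⟨hne, hx, hy⟩ := hxy
      have hasm : ∀ j, asmF i k n (p, m, x, y) j
          = if j = i then k else if j = n then x else if j = n + 1 then y
            else p j + m j := fun j => rfl
      have hval : ∀ j, j ≠ i → j ≠ n → j ≠ n + 1 → asmF i k n (p, m, x, y) j = p j + m j := by
        intro j h1 h2 h3
        rw [hasm, if_neg h1, if_neg h2, if_neg h3]
      constructor
      · refine ⟨fun j => ?_, fun j hj => ?_, ?_, fun j hj l hl => ?_, fun _ => ?_, ?_⟩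
        · rw [hasm]
          split_ifs with h h h
          · omega
          · omega
          · omega
          · by_cases hA : j ∈ Finset.Icc 1 (i - 1)
            · have hm0 : m j = 0 := hm2 j (by rw [Finset.mem_Icc] at hA; rw [Finset.mem_Ico]; omega)
              have := hp1 j
              omega
            · have hp0 : p j = 0 := hp2 j hA
              have := hm1 j
              omega
        · rw [Finset.mem_Icc] at hj
          rw [hval j (by omega) (by omega) (by omega),
            hp2 j (by rw [Finset.mem_Icc]; omega), hm2 j (by rw [Finset.mem_Ico]; omega)]
        · rw [hasm, if_neg (by omega : ¬ n + 1 = i), if_neg (by omega : ¬ n + 1 = n),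
            if_pos rfl]
          omega
        · -- t j = b → earlier zero
          rw [hasm] at hj
          have hji : j ≠ i := by
            intro h; rw [if_pos h] at hj; omega
          rw [if_neg hji] at hj
          have hjn : j ≠ n := by
            intro h; rw [if_pos h] at hj; omega
          rw [if_neg hjn] at hj
          have hjn1 : j ≠ n + 1 := by
            intro h; rw [if_pos h] at hj; omega
          rw [if_neg hjn1] at hj
          -- p j + m j = b
          have hjA : j ∈ Finset.Icc 1 (i - 1) := by
            by_contra hc
            have hp0 : p j = 0 := hp2 j hc
            have := hm1 j
            omega
          rw [Finset.mem_Icc] at hjA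
          have hm0 : m j = 0 := hm2 j (by rw [Finset.mem_Ico]; omega)
          have hpj : p j = b := by omega
          have hl0 : p l = 0 := hp3 j hpj l hl
          have hml : m l = 0 := hm2 l (by rw [Finset.mem_Ico]; omega)
          rw [hval l (by omega) (by omega) (by omega), hl0, hml]
        · rw [hasm, if_neg (by omega : ¬ n = i), if_pos rfl]
          omega
        · intro hA hB
          exfalso
          apply hne
          rw [hasm, if_neg (by omega : ¬ n = i), if_pos rfl] at hA
          rw [hasm, if_neg (by omega : ¬ n + 1 = i), if_neg (by omega : ¬ n + 1 = n),
            if_pos rfl] at hB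
          rw [hA, hB]
      · rw [hasm, if_pos rfl]
  -- Step 2: injectivity and cardinality
  have hinj : Set.InjOn (asmF i k n) ↑(P ×ˢ M ×ˢ Q) := by
    rintro ⟨p, m, x, y⟩ h ⟨p', m', x', y'⟩ h' heq
    simp only [Finset.mem_coe, Finset.mem_product] at h h'
    obtain ⟨hp, hm, -⟩ := h
    obtain ⟨hp', hm', -⟩ := h'
    obtain ⟨-, hp2, -⟩ := (hmemP p).1 hp
    obtain ⟨-, hq2, -⟩ := (hmemP p').1 hp'
    obtain ⟨-, hm2⟩ := (hmemM m).1 hm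
    obtain ⟨-, hn2⟩ := (hmemM m').1 hm'
    have hx : x = x' := by
      have := congrFun heq n
      rw [asmF, asmF] at this
      simpa [show ¬ n = i by omega] using this
    have hy : y = y' := by
      have := congrFun heq (n + 1)
      rw [asmF, asmF] at this
      simpa [show ¬ n + 1 = i by omega, show ¬ n + 1 = n by omega] using this
    have hpp : p = p' := by
      funext j
      by_cases hj : j ∈ Finset.Icc 1 (i - 1)
      · rw [Finset.mem_Icc] at hj
        have := congrFun heq j
        rw [asmF, asmF] at this
        simp only [show ¬ j = i by omega, show ¬ j = n by omega, show ¬ j = n + 1 by omega,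
          if_neg, if_false] at this
        have ha : m j = 0 := hm2 j (by rw [Finset.mem_Ico]; omega)
        have hb' : m' j = 0 := hn2 j (by rw [Finset.mem_Ico]; omega)
        omega
      · rw [hp2 j hj, hq2 j hj]
    have hmm : m = m' := by
      funext j
      by_cases hj : j ∈ Finset.Ico (i + 1) n
      · rw [Finset.mem_Ico] at hj
        have := congrFun heq j
        rw [asmF, asmF] at this
        simp only [show ¬ j = i by omega, show ¬ j = n by omega, show ¬ j = n + 1 by omega,
          if_neg, if_false] at this
        have ha : p j = 0 := hp2 j (by rw [Finset.mem_Icc]; omega)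
        have hb' : p' j = 0 := hq2 j (by rw [Finset.mem_Icc]; omega)
        omega
      · rw [hm2 j hj, hn2 j hj]
    simp [Prod.ext_iff, hx, hy, hpp, hmm]
  have hQcard : Q.card = b * b - 1 := by
    have hmem : ((b - 1, b - 1) : ℕ × ℕ) ∈ Finset.range b ×ˢ Finset.range b :=
      Finset.mem_product.2 ⟨Finset.mem_range.2 (by omega), Finset.mem_range.2 (by omega)⟩
    rw [hQ, Finset.card_erase_of_mem hmem, Finset.card_product, Finset.card_range]
  have hi' : i - 1 + 1 = i := by omega
  rw [hset, Set.ncard_coe_finset, hF, Finset.card_image_of_injOn hinj,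
    Finset.card_product, Finset.card_product, card_prefF hb1, card_boxF hb1, hQcard, hi']
  -- Step 3: arithmetic
  have hle : b ^ (n - i - 1) ≤ b ^ (n - 1) := Nat.pow_le_pow_right hb1 (by omega)
  have hbb : 1 ≤ b * b := by nlinarith
  zify [hle, hbb]
  have he : n - i - 1 = n - 1 - i := by omega
  rw [he]
  have hpow : (b : ℤ) ^ (n - 1) = (b : ℤ) ^ i * (b : ℤ) ^ (n - 1 - i) := by
    rw [← pow_add]
    congr 1
    omega
  rw [hpow]
  have key := geom_sum_mul (b : ℤ) i
  linear_combination ((b : ℤ) + 1) * (b : ℤ) ^ (n - 1 - i) * key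

end RbMain
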